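/- Let R⁺ be the positive roots of type C_n in ℝ^n. For 1 ≤ i < j ≤ n, the unordered pairs {β, γ} ⊆ R⁺ with β + γ = ε_i + ε_j are exactly: {ε_j − ε_k, ε_i + ε_k} for j < k ≤ n; {ε_j + ε_l, ε_i − ε_l} for i < l ≤ n with l ≠ j (where ε_j + ε_l denotes ε_{min(j,l)} + ε_{max(j,l)}); and {2ε_j, ε_i − ε_j}. -/
import Mathlib

private lemma keyA {n : ℕ} {a b c d i j : Fin n} (hab : a < b) (hcd : c < d) (hij : i < j)
    (h : (Pi.single a 1 - Pi.single b 1) + (Pi.single c 1 + Pi.single d 1)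
        = (Pi.single i (1:ℝ) : Fin n → ℝ) + Pi.single j 1) :
    (a = j ∧ j < b ∧ c = i ∧ d = b) ∨ (a = i ∧ b ≠ j ∧ c = min j b ∧ d = max j b) := by
  have H : ∀ x : Fin n, ((if x = a then (1:ℝ) else 0) - (if x = b then 1 else 0))
      + ((if x = c then (1:ℝ) else 0) + (if x = d then 1 else 0))
      = (if x = i then (1:ℝ) else 0) + (if x = j then 1 else 0) := by
    intro x
    have := congrFun h x
    simpa [Pi.single_apply] using this
  have hija : a = i ∨ a = j := by
    by_contra hcon
    push_neg at hcon
    have := H a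
    simp [hab.ne, hcon.1, hcon.2] at this
    split_ifs at this <;> norm_num at this
  rcases hija with rfl | rfl
  · right
    have hbj : b ≠ j := by
      rintro rfl
      have := H c
      simp [hcd.ne] at this
      split_ifs at this <;> norm_num at this
    have hj : c = j ∨ d = j := by
      by_contra hcon
      push_neg at hcon
      have := H j
      simp [hij.ne', Ne.symm hbj, Ne.symm hcon.1, Ne.symm hcon.2] at this
    have hb : c = b ∨ d = b := by
      by_contra hcon
      push_neg at hcon
      have := H b
      simp [hab.ne', hbj, Ne.symm hcon.1, Ne.symm hcon.2] at this
    refine ⟨rfl, hbj, ?_⟩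
    rcases hj with rfl | rfl
    · rcases hb with rfl | rfl
      · exact absurd rfl hbj
      · exact ⟨(min_eq_left hcd.le).symm, (max_eq_right hcd.le).symm⟩
    · rcases hb with rfl | rfl
      · exact ⟨(min_eq_right hcd.le).symm, (max_eq_left hcd.le).symm⟩
      · exact absurd rfl hbj
  · left
    have hdb : d = b := by
      have hb : c = b ∨ d = b := by
        by_contra hcon
        push_neg at hcon
        have := H b
        simp [hab.ne', (hij.trans hab).ne', Ne.symm hcon.1, Ne.symm hcon.2] at this
      rcases hb with rfl | rfl
      · exfalso
        have := H d
        simp [hcd.ne', ((hij.trans hab).trans hcd).ne', (hab.trans hcd).ne', hcd.ne'] at this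
      · rfl
    subst hdb
    have hci : c = i := by
      by_contra hci
      have := H c
      simp [hci] at this
    exact ⟨rfl, hab, hci, rfl⟩

private lemma keyB {n : ℕ} {a b c i j : Fin n} (hab : a < b) (hij : i < j)
    (h : (Pi.single a 1 - Pi.single b 1) + (2:ℝ) • (Pi.single c 1 : Fin n → ℝ)
        = (Pi.single i (1:ℝ) : Fin n → ℝ) + Pi.single j 1) :
    a = i ∧ b = j ∧ c = j := by
  have H : ∀ x : Fin n, ((if x = a then (1:ℝ) else 0) - (if x = b then 1 else 0))
      + 2 * (if x = c then (1:ℝ) else 0)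
      = (if x = i then (1:ℝ) else 0) + (if x = j then 1 else 0) := by
    intro x
    have := congrFun h x
    simpa [Pi.single_apply, mul_ite] using this
  have hcb : c = b := by
    by_contra hcb
    have := H c
    simp [hcb] at this
    by_cases h1 : c = i
    · by_cases h2 : c = j
      · exact hij.ne (h1.symm.trans h2)
      · simp [h1, h2, hij.ne] at this
        split_ifs at this <;> norm_num at this
    · simp [h1] at this
      split_ifs at this <;> norm_num at this
  subst hcb
  have hcj : c = j := by
    by_contra hcj
    have hci : c = i := by
      by_cases h1 : c = i
      · exact h1
      · have := H c
        simp [hcj, hab.ne', h1] at this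
        norm_num at this
    have := H a
    simp [hab.ne, (hci ▸ hab : a < i).ne, ((hci ▸ hab : a < i).trans hij).ne] at this
  subst hcj
  have hai : a = i := by
    by_contra hai
    have := H a
    simp [hab.ne, hai] at this
  exact ⟨hai, rfl, rfl⟩

/-- The positive roots of type `C_n` inside `ℝ^n`:
`{ε_i ± ε_j : i < j} ∪ {2ε_i}`. -/
def posRootsC (n : ℕ) : Set (Fin n → ℝ) :=
  {x | (∃ i j : Fin n, i < j ∧
        (x = Pi.single i 1 - Pi.single j 1 ∨ x = Pi.single i 1 + Pi.single j 1)) ∨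
      ∃ i : Fin n, x = (2 : ℝ) • (Pi.single i 1 : Fin n → ℝ)}

/-- For `i < j`, the unordered pairs `{β, γ}` of positive roots of type `C_n` with
`β + γ = ε_i + ε_j` are exactly: `{ε_j - ε_k, ε_i + ε_k}` for `j < k ≤ n`;
`{ε_j + ε_l, ε_i - ε_l}` for `i < l ≤ n`, `l ≠ j` (with `ε_j + ε_l` meaning
`ε_{min(j,l)} + ε_{max(j,l)}`); and `{2ε_j, ε_i - ε_j}`. -/
theorem typeC_decompositions_of_add (n : ℕ) (i j : Fin n) (hij : i < j)
    (β γ : Fin n → ℝ) (hβ : β ∈ posRootsC n) (hγ : γ ∈ posRootsC n) :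
    β + γ = Pi.single i 1 + Pi.single j 1 ↔
      ((∃ k : Fin n, j < k ∧
          ((β = Pi.single j 1 - Pi.single k 1 ∧ γ = Pi.single i 1 + Pi.single k 1) ∨
           (β = Pi.single i 1 + Pi.single k 1 ∧ γ = Pi.single j 1 - Pi.single k 1))) ∨
       (∃ l : Fin n, i < l ∧ l ≠ j ∧
          ((β = Pi.single (min j l) 1 + Pi.single (max j l) 1 ∧ γ = Pi.single i 1 - Pi.single l 1) ∨
           (β = Pi.single i 1 - Pi.single l 1 ∧ γ = Pi.single (min j l) 1 + Pi.single (max j l) 1))) ∨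
       ((β = (2 : ℝ) • (Pi.single j 1 : Fin n → ℝ) ∧ γ = Pi.single i 1 - Pi.single j 1) ∨
        (β = Pi.single i 1 - Pi.single j 1 ∧ γ = (2 : ℝ) • (Pi.single j 1 : Fin n → ℝ)))) := by
  constructor
  · intro h
    rcases hβ with ⟨a, b, hab, rfl | rfl⟩ | ⟨a, rfl⟩ <;>
      rcases hγ with ⟨c, d, hcd, rfl | rfl⟩ | ⟨c, rfl⟩
    · -- (minus, minus): impossible
      exfalso
      have := congrArg (fun v : Fin n → ℝ => ∑ x, v x) h
      simp [Finset.sum_add_distrib, Finset.sum_sub_distrib, Pi.single_apply] at this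
      norm_num at this
    · -- (minus, plus)
      rcases keyA hab hcd hij h with ⟨rfl, hjb, rfl, rfl⟩ | ⟨rfl, hbj, rfl, rfl⟩
      · exact Or.inl ⟨d, hjb, Or.inl ⟨rfl, rfl⟩⟩
      · exact Or.inr (Or.inl ⟨b, hab, hbj, Or.inr ⟨rfl, rfl⟩⟩)
    · -- (minus, 2e)
      obtain ⟨rfl, rfl, rfl⟩ := keyB hab hij h
      exact Or.inr (Or.inr (Or.inr ⟨rfl, rfl⟩))
    · -- (plus, minus)
      rw [add_comm] at h
      rcases keyA hcd hab hij h with ⟨rfl, hjd, rfl, rfl⟩ | ⟨rfl, hdj, rfl, rfl⟩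
      · exact Or.inl ⟨b, hjd, Or.inr ⟨rfl, rfl⟩⟩
      · exact Or.inr (Or.inl ⟨d, hcd, hdj, Or.inl ⟨rfl, rfl⟩⟩)
    · -- (plus, plus): impossible
      exfalso
      have := congrArg (fun v : Fin n → ℝ => ∑ x, v x) h
      simp [Finset.sum_add_distrib, Pi.single_apply] at this
    · -- (plus, 2e): impossible
      exfalso
      have := congrArg (fun v : Fin n → ℝ => ∑ x, v x) h
      simp [Finset.sum_add_distrib, Pi.single_apply, mul_ite] at this
    · -- (2e, minus)
      rw [add_comm] at h
      obtain ⟨rfl, rfl, rfl⟩ := keyB hcd hij h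
      exact Or.inr (Or.inr (Or.inl ⟨rfl, rfl⟩))
    · -- (2e, plus): impossible
      exfalso
      have := congrArg (fun v : Fin n → ℝ => ∑ x, v x) h
      rw [add_comm] at this
      simp [Finset.sum_add_distrib, Pi.single_apply, mul_ite] at this
    · -- (2e, 2e): impossible
      exfalso
      have := congrArg (fun v : Fin n → ℝ => ∑ x, v x) h
      simp [Finset.sum_add_distrib, Pi.single_apply, mul_ite] at this
      norm_num at this
  · rintro (⟨k, hjk, ⟨rfl, rfl⟩ | ⟨rfl, rfl⟩⟩ |
      ⟨l, hil, hlj, ⟨rfl, rfl⟩ | ⟨rfl, rfl⟩⟩ | ⟨rfl, rfl⟩ | ⟨rfl, rfl⟩)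
    · abel
    · abel
    · rcases lt_or_gt_of_ne (Ne.symm hlj) with h' | h'
      · simp only [min_eq_left h'.le, max_eq_right h'.le]
        abel
      · simp only [min_eq_right h'.le, max_eq_left h'.le]
        abel
    · rcases lt_or_gt_of_ne (Ne.symm hlj) with h' | h'
      · simp only [min_eq_left h'.le, max_eq_right h'.le]
        abel
      · simp only [min_eq_right h'.le, max_eq_left h'.le]
        abel
    · rw [two_smul]; abel
    · rw [two_smul]; abel
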